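/- For every analytic set A ⊆ ℝⁿ there exists an open set U ⊆ A such that A \ U has Lebesgue measure zero. -/

import Mathlib

open Set MeasureTheory

/-- An analytic set in ℝⁿ. -/
def IsAnalyticSet {n : ℕ} (A : Set (Fin n → ℝ)) : Prop :=
  ∃ (W : Set (Fin n → ℝ)) (I : Finset ℕ) (g : ℕ → (Fin n → ℝ) → ℝ),
    IsOpen W ∧ (∀ i ∈ I, AnalyticOnNhd ℝ (g i) W) ∧
    A = {x | x ∈ W ∧ ∀ i ∈ I, g i x ≤ 0}

namespace AnalyticNullAux

open Filter Topology


variable {n : ℕ}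

/-- Partial derivative in direction `j`. -/
noncomputable def D (j : Fin n) (g : (Fin n → ℝ) → ℝ) : (Fin n → ℝ) → ℝ :=
  fun x => fderiv ℝ g x (Pi.single j 1)

/-- Iterated partial derivatives along a list of directions (head applied first). -/
noncomputable def iterD : List (Fin n) → ((Fin n → ℝ) → ℝ) → ((Fin n → ℝ) → ℝ)
  | [], g => g
  | j :: s, g => iterD s (D j g)

@[simp] lemma iterD_nil (g : (Fin n → ℝ) → ℝ) : iterD [] g = g := rfl

@[simp] lemma iterD_cons (j : Fin n) (s : List (Fin n)) (g : (Fin n → ℝ) → ℝ) :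
    iterD (j :: s) g = iterD s (D j g) := rfl

lemma D_analytic {W : Set (Fin n → ℝ)} {g : (Fin n → ℝ) → ℝ}
    (hg : AnalyticOnNhd ℝ g W) (j : Fin n) : AnalyticOnNhd ℝ (D j g) W := by
  have h := (ContinuousLinearMap.apply ℝ ℝ (Pi.single j 1)).comp_analyticOnNhd hg.fderiv
  show AnalyticOnNhd ℝ (fun x => fderiv ℝ g x (Pi.single j 1)) W
  simpa [Function.comp_def] using h

lemma iterD_analytic {W : Set (Fin n → ℝ)} :
    ∀ (s : List (Fin n)) {g : (Fin n → ℝ) → ℝ}, AnalyticOnNhd ℝ g W →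
      AnalyticOnNhd ℝ (iterD s g) W
  | [], _, hg => hg
  | j :: s, _, hg => iterD_analytic s (D_analytic hg j)

lemma iterD_concat (j : Fin n) :
    ∀ (s : List (Fin n)) (g : (Fin n → ℝ) → ℝ), iterD (s ++ [j]) g = D j (iterD s g)
  | [], _ => rfl
  | a :: t, g => by simp [iterD_concat j t (D a g)]

lemma iteratedFDerivWithin_eq_iterD {W : Set (Fin n → ℝ)} (hW : IsOpen W) :
    ∀ (k : ℕ) (g : (Fin n → ℝ) → ℝ), AnalyticOnNhd ℝ g W → ∀ x ∈ W, ∀ v : Fin k → Fin n,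
      ∃ s : List (Fin n),
        iteratedFDerivWithin ℝ k g W x (fun i => Pi.single (v i) 1) = iterD s g x := by
  intro k
  induction k with
  | zero =>
    intro g _ x _ v
    exact ⟨[], by simp⟩
  | succ k IH =>
    intro g hg x hx v
    have h1 : iteratedFDerivWithin ℝ (k+1) g W x (fun i => Pi.single (v i) 1)
        = iteratedFDerivWithin ℝ k (fun y => fderivWithin ℝ g W y) W x
            (Fin.init fun i : Fin (k+1) => (Pi.single (v i) 1 : Fin n → ℝ)) (Pi.single (v (Fin.last k)) 1) := by
      exact iteratedFDerivWithin_succ_apply_right hW.uniqueDiffOn hx _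
    have h2 : iteratedFDerivWithin ℝ k (fun y => fderivWithin ℝ g W y) W x
        = iteratedFDerivWithin ℝ k (fderiv ℝ g) W x :=
      iteratedFDerivWithin_congr (fun y hy => fderivWithin_of_isOpen hW hy) hx _
    have hcd : ContDiffOn ℝ k (fderiv ℝ g) W :=
      (hg.fderiv).contDiffOn hW.uniqueDiffOn
    have h3 := (ContinuousLinearMap.apply ℝ ℝ (Pi.single (v (Fin.last k)) 1)).iteratedFDerivWithin_comp_left
      (f := fderiv ℝ g) (hcd x hx) hW.uniqueDiffOn hx (le_refl (k : WithTop ℕ∞))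
    have h4 : (⇑(ContinuousLinearMap.apply ℝ ℝ (Pi.single (v (Fin.last k)) 1)) ∘ fderiv ℝ g)
        = D (v (Fin.last k)) g := by
      funext y; simp [D, Function.comp]
    have h5 : iteratedFDerivWithin ℝ k (fderiv ℝ g) W x
          (Fin.init fun i : Fin (k+1) => (Pi.single (v i) 1 : Fin n → ℝ)) (Pi.single (v (Fin.last k)) 1)
        = iteratedFDerivWithin ℝ k (D (v (Fin.last k)) g) W x
            (Fin.init fun i : Fin (k+1) => (Pi.single (v i) 1 : Fin n → ℝ)) := by
      rw [← h4, h3]; rfl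
    have h6 : (Fin.init fun i : Fin (k+1) => (Pi.single (v i) 1 : Fin n → ℝ))
        = fun i : Fin k => Pi.single (v i.castSucc) (1:ℝ) := by
      funext i; simp [Fin.init]
    obtain ⟨s, hs⟩ := IH (D (v (Fin.last k)) g) (D_analytic hg (v (Fin.last k))) x hx
      (fun i => v i.castSucc)
    exact ⟨v (Fin.last k) :: s, by rw [h1, h2, h5, h6, hs]; rfl⟩

lemma eventually_zero_of_iterD {W : Set (Fin n → ℝ)} (hW : IsOpen W)
    {g : (Fin n → ℝ) → ℝ} (hg : AnalyticOnNhd ℝ g W) {x : Fin n → ℝ} (hx : x ∈ W)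
    (h : ∀ s : List (Fin n), iterD s g x = 0) : g =ᶠ[𝓝 x] 0 := by
  have hiter : ∀ k : ℕ, iteratedFDeriv ℝ k g x = 0 := by
    intro k
    rw [← iteratedFDerivWithin_of_isOpen k hW hx]
    have hbasis : ∀ v : Fin k → Fin n,
        iteratedFDerivWithin ℝ k g W x (fun i => Pi.single (v i) 1) = 0 := by
      intro v
      obtain ⟨s, hs⟩ := iteratedFDerivWithin_eq_iterD hW k g hg x hx v
      rw [hs, h s]
    have := Module.Basis.ext_multilinear (R := ℝ) (e := fun _ => Pi.basisFun ℝ (Fin n))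
      (f := (iteratedFDerivWithin ℝ k g W x).toMultilinearMap)
      (g := (0 : ContinuousMultilinearMap ℝ (fun _ : Fin k => (Fin n → ℝ)) ℝ).toMultilinearMap)
      (fun v => by simpa [Pi.basisFun_apply] using hbasis v)
    exact ContinuousMultilinearMap.toMultilinearMap_injective this
  obtain ⟨p, hpa⟩ := hg x hx
  obtain ⟨r, hp⟩ := hpa
  have hzero : ∀ y ∈ EMetric.ball (0 : Fin n → ℝ) r, g (x + y) = 0 := by
    intro y hy
    have hsum := hp.hasSum_iteratedFDeriv hy
    simp only [hiter, ContinuousMultilinearMap.zero_apply, smul_zero] at hsum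
    exact (hasSum_zero.unique hsum).symm
  filter_upwards [EMetric.ball_mem_nhds x hp.r_pos] with z hz
  have hz' : z - x ∈ Metric.eball (0 : Fin n → ℝ) r := by
    rw [Metric.mem_eball]
    simpa [edist_eq_enorm_sub] using hz
  have hxz : x + (z - x) = z := by abel
  have := hzero (z - x) hz'
  rw [hxz] at this
  simpa using this



lemma slice_countable_null {m : ℕ} (j : Fin (m+1)) {S : Set (Fin (m+1) → ℝ)}
    (hS : MeasurableSet S)
    (h : ∀ y : Fin m → ℝ, {t : ℝ | j.insertNth t y ∈ S}.Countable) :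
    volume S = 0 := by
  let e := MeasurableEquiv.piFinSuccAbove (fun _ : Fin (m+1) => ℝ) j
  have me : MeasurePreserving e volume volume :=
    volume_preserving_piFinSuccAbove (fun _ : Fin (m+1) => ℝ) j
  have hpre : volume (⇑e.symm ⁻¹' S) = volume S :=
    (MeasurePreserving.symm e me).measure_preimage hS.nullMeasurableSet
  have hmeas : MeasurableSet (⇑e.symm ⁻¹' S) := e.symm.measurable hS
  rw [← hpre, Measure.volume_eq_prod, Measure.prod_apply_symm hmeas]
  have hz : ∀ y : Fin m → ℝ, volume ((fun t : ℝ => (t, y)) ⁻¹' (⇑e.symm ⁻¹' S)) = 0 := by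
    intro y
    have heq : ((fun t : ℝ => (t, y)) ⁻¹' (⇑e.symm ⁻¹' S)) = {t : ℝ | j.insertNth t y ∈ S} := by
      ext t
      simp [e, MeasurableEquiv.piFinSuccAbove_symm_apply, Fin.insertNthEquiv]
    rw [heq]
    exact (h y).measure_zero _
  simp only [hz, lintegral_zero]

lemma insertNth_eq_add_smul {m : ℕ} (j : Fin (m+1)) (y : Fin m → ℝ) (t : ℝ) :
    j.insertNth t y = (j.insertNth 0 y : Fin (m+1) → ℝ) + t • (Pi.single j 1 : Fin (m+1) → ℝ) := by
  funext i
  refine Fin.succAboveCases j ?_ ?_ i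
  · simp
  · intro k
    simp [Fin.insertNth_apply_succAbove, Pi.single_apply, (Fin.succAbove_ne j k)]


lemma null_S {n : ℕ} {W : Set (Fin n → ℝ)} (hW : IsOpen W) {F : (Fin n → ℝ) → ℝ}
    (hF : AnalyticOnNhd ℝ F W) (j : Fin n) :
    volume {x | x ∈ W ∧ F x = 0 ∧ D j F x ≠ 0} = 0 := by
  classical
  have hFc : ContinuousOn F W := hF.continuousOn
  have hDc : ContinuousOn (D j F) W := (D_analytic hF j).continuousOn
  have hU1 : IsOpen (W ∩ F ⁻¹' ({0}ᶜ)) := hFc.isOpen_inter_preimage hW isOpen_compl_singleton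
  have hU2 : IsOpen (W ∩ (D j F) ⁻¹' ({0}ᶜ)) :=
    hDc.isOpen_inter_preimage hW isOpen_compl_singleton
  have hset : {x | x ∈ W ∧ F x = 0 ∧ D j F x ≠ 0}
      = (W \ (W ∩ F ⁻¹' ({0}ᶜ))) ∩ (W ∩ (D j F) ⁻¹' ({0}ᶜ)) := by
    ext x
    constructor
    · rintro ⟨h1, h2, h3⟩
      exact ⟨⟨h1, fun hc => hc.2 (by simpa using h2)⟩, h1, by simpa using h3⟩
    · rintro ⟨⟨h1, h2⟩, _, h3⟩
      refine ⟨h1, ?_, by simpa using h3⟩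
      by_contra hne
      exact h2 ⟨h1, by simpa using hne⟩
  have hS : MeasurableSet {x | x ∈ W ∧ F x = 0 ∧ D j F x ≠ 0} := by
    rw [hset]
    exact (hW.measurableSet.diff hU1.measurableSet).inter hU2.measurableSet
  have hn : 0 < n := j.pos
  obtain ⟨m, rfl⟩ : ∃ m, n = m + 1 := ⟨n - 1, by omega⟩
  apply slice_countable_null j hS
  intro y
  refine IsLindelof.countable (HereditarilyLindelof_LindelofSets _) ?_
  rw [discreteTopology_subtype_iff]
  intro t ht
  simp only [mem_setOf_eq] at ht
  obtain ⟨hxW, hFx, hDx⟩ := ht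
  have hda : HasDerivAt (fun u : ℝ => F (j.insertNth u y)) (D j F (j.insertNth t y)) t := by
    have hL : HasDerivAt (fun u : ℝ => j.insertNth u y) (Pi.single j 1 : Fin (m+1) → ℝ) t := by
      have heq : (fun u : ℝ => (j.insertNth u y : Fin (m+1) → ℝ))
          = fun u => (j.insertNth 0 y : Fin (m+1) → ℝ) + u • (Pi.single j 1 : Fin (m+1) → ℝ) :=
        funext fun u => insertNth_eq_add_smul j y u
      rw [heq]
      simpa using ((hasDerivAt_id t).smul_const (Pi.single j (1:ℝ) : Fin (m+1) → ℝ)).const_add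
        (j.insertNth 0 y : Fin (m+1) → ℝ)
    have hFz : HasFDerivAt F (fderiv ℝ F (j.insertNth t y)) (j.insertNth t y) :=
      (hF _ hxW).differentiableAt.hasFDerivAt
    have := hFz.comp_hasDerivAt t hL
    simpa [D, Function.comp_def] using this
  have hslope := hasDerivAt_iff_tendsto_slope.mp hda
  have hne := hslope.eventually_ne hDx
  rw [inf_principal_eq_bot]
  filter_upwards [hne] with u hu
  simp only [mem_compl_iff, mem_setOf_eq]
  rintro ⟨h1, h2, h3⟩
  apply hu
  simp [slope, hFx, h2]

lemma null_Z {n : ℕ} {W : Set (Fin n → ℝ)} (hW : IsOpen W) {g : (Fin n → ℝ) → ℝ}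
    (hg : AnalyticOnNhd ℝ g W) :
    volume {x | x ∈ W ∧ g x = 0 ∧ ¬ g =ᶠ[𝓝 x] 0} = 0 := by
  classical
  have cover : {x | x ∈ W ∧ g x = 0 ∧ ¬ g =ᶠ[𝓝 x] 0}
      ⊆ ⋃ (s : List (Fin n)) (j : Fin n),
          {x | x ∈ W ∧ iterD s g x = 0 ∧ D j (iterD s g) x ≠ 0} := by
    rintro x ⟨hxW, hgx, hne⟩
    have hex : ∃ k, ∃ s : List (Fin n), s.length = k ∧ iterD s g x ≠ 0 := by
      by_contra hcon
      push_neg at hcon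
      exact hne (eventually_zero_of_iterD hW hg hxW fun s => hcon s.length s rfl)
    obtain ⟨s, hslen, hsne⟩ := Nat.find_spec hex
    have hpos : 0 < Nat.find hex := by
      rcases Nat.eq_zero_or_pos (Nat.find hex) with h0 | h
      · exfalso
        rw [h0] at hslen
        have hsnil : s = [] := List.length_eq_zero_iff.mp hslen
        rw [hsnil] at hsne
        exact hsne (by simpa using hgx)
      · exact h
    rcases s.eq_nil_or_concat' with rfl | ⟨t, j, rfl⟩
    · exfalso
      simp only [List.length_nil] at hslen
      omega
    · have htlen : t.length < Nat.find hex := by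
        rw [← hslen, List.length_append]
        simp
      have htzero : iterD t g x = 0 := by
        by_contra h0
        exact Nat.find_min hex htlen ⟨t, rfl, h0⟩
      have hD : D j (iterD t g) x ≠ 0 := by
        rw [← iterD_concat]
        exact hsne
      exact mem_iUnion.mpr ⟨t, mem_iUnion.mpr ⟨j, hxW, htzero, hD⟩⟩
  refine measure_mono_null cover
    (measure_iUnion_null fun s => measure_iUnion_null fun j => ?_)
  exact null_S hW (iterD_analytic s hg) j

end AnalyticNullAux

open AnalyticNullAux Filter Topology in
/-- For every analytic set `A ⊆ ℝⁿ` there is an open `U ⊆ A` such that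
`A \ U` has Lebesgue measure zero. -/
theorem analyticSet_has_big_open {n : ℕ} {A : Set (Fin n → ℝ)}
    (hA : IsAnalyticSet A) :
    ∃ U : Set (Fin n → ℝ), IsOpen U ∧ U ⊆ A ∧ volume (A \ U) = 0 := by
  obtain ⟨W, I, g, hW, hg, hAeq⟩ := hA
  refine ⟨interior A, isOpen_interior, interior_subset, ?_⟩
  have cover : A \ interior A
      ⊆ ⋃ i : (I : Finset ℕ), {x | x ∈ W ∧ g i x = 0 ∧ ¬ (g i) =ᶠ[𝓝 x] 0} := by
    rintro x ⟨hxA, hxI⟩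
    have hxW : x ∈ W := by rw [hAeq] at hxA; exact hxA.1
    have hgle : ∀ i ∈ I, g i x ≤ 0 := by rw [hAeq] at hxA; exact hxA.2
    by_contra hnot
    have hev : ∀ i ∈ I, ∀ᶠ y in 𝓝 x, g i y ≤ 0 := by
      intro i hi
      rcases lt_or_eq_of_le (hgle i hi) with hlt | heq0
      · have hc : ContinuousAt (g i) x := ((hg i hi) x hxW).continuousAt
        have hmem : (g i) ⁻¹' (Iio 0) ∈ 𝓝 x := hc.preimage_mem_nhds (Iio_mem_nhds hlt)
        filter_upwards [hmem] with y hy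
        exact le_of_lt hy
      · have hev0 : (g i) =ᶠ[𝓝 x] 0 := by
          by_contra hne
          exact hnot (mem_iUnion.mpr ⟨⟨i, hi⟩, hxW, heq0, hne⟩)
        filter_upwards [hev0] with y hy
        simp only [Pi.zero_apply] at hy
        exact hy.le
    have hall : ∀ᶠ y in 𝓝 x, y ∈ A := by
      have hWev : ∀ᶠ y in 𝓝 x, y ∈ W := hW.mem_nhds hxW
      have h2 : ∀ᶠ y in 𝓝 x, ∀ i ∈ I, g i y ≤ 0 := (eventually_all_finset I).mpr hev
      filter_upwards [hWev, h2] with y hy1 hy2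
      rw [hAeq]
      exact ⟨hy1, hy2⟩
    exact hxI (mem_interior_iff_mem_nhds.mpr hall)
  exact measure_mono_null cover
    (measure_iUnion_null fun i => null_Z hW (hg i i.2))
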